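/- Fix integers d, P ≥ 1, m ≥ 2 even, and M ≥ 1. Let μ ∈ ℝ^d be a unit vector and v₁, …, v_M ∈ ℝ^d unit vectors each orthogonal to μ. Let X ∈ ℝ^{d×P} have s₁ columns equal to μ, s₂ columns equal to −μ, and its remaining P − s₁ − s₂ columns taken from {v₁, …, v_M}. Let a ∈ ℝ^m have exactly m/2 entries equal to 1/√m and m/2 entries equal to −1/√m, let θ > 0 and q ≥ 0, let V ∈ ℝ^{m×d} have i-th row equal to sign(aᵢ)·θ·μᵀ, and let W := q·μμᵀ. Then the one-layer Transformer output satisfies exactly f(X; a, V, W) = (θ·√m/(2P))·[ s₁·A₊ + s₂·A₋ + (P − s₁ − s₂)·(s₁ − s₂)/P ], where A₊ = (s₁·e^{q} − s₂·e^{−q})/(s₁·e^{q} + s₂·e^{−q} + P − s₁ − s₂) and A₋ = (s₁·e^{−q} − s₂·e^{q})/(s₁·e^{−q} + s₂·e^{q} + P − s₁ − s₂). -/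
import Mathlib


open Matrix

/-- The `s`-th column of `X ∈ ℝ^{d×P}` as a vector. -/
def colVec {d P : ℕ} (X : Matrix (Fin d) (Fin P) ℝ) (s : Fin P) : Fin d → ℝ :=
  fun k => X k s

/-- Softmax attention weight of key token `s` for query token `l`:
`softmax_l(x_sᵀWx_l) = exp(x_sᵀWx_l) / ∑_r exp(x_rᵀWx_l)`. -/
noncomputable def attnWeight {d P : ℕ} (X : Matrix (Fin d) (Fin P) ℝ)
    (W : Matrix (Fin d) (Fin d) ℝ) (s l : Fin P) : ℝ :=
  Real.exp (colVec X s ⬝ᵥ (W *ᵥ colVec X l)) /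
    ∑ r : Fin P, Real.exp (colVec X r ⬝ᵥ (W *ᵥ colVec X l))

/-- One-layer single-head Transformer:
`f(X; a, V, W) = (1/P)·∑_l aᵀ·ReLU(V·∑_s x_s·softmax_l(x_sᵀWx_l))`. -/
noncomputable def transformer {d P m : ℕ} (a : Fin m → ℝ)
    (V : Matrix (Fin m) (Fin d) ℝ) (W : Matrix (Fin d) (Fin d) ℝ)
    (X : Matrix (Fin d) (Fin P) ℝ) : ℝ :=
  (1 / (P : ℝ)) * ∑ l : Fin P, ∑ i : Fin m,
    a i * max ((V *ᵥ ∑ s : Fin P, attnWeight X W s l • colVec X s) i) 0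

/-- Auxiliary: balanced ReLU combination. -/
lemma half_relu_sum (m : ℝ) (hm : 0 < m) (T : ℝ) :
    (m / 2) * (1 / Real.sqrt m * max T 0) + (m / 2) * (-(1 / Real.sqrt m) * max (-T) 0)
      = Real.sqrt m / 2 * T := by
  have h1 : Real.sqrt m * Real.sqrt m = m := Real.mul_self_sqrt hm.le
  have h2 : Real.sqrt m ≠ 0 := ne_of_gt (Real.sqrt_pos.2 hm)
  have h3 : max T 0 - max (-T) 0 = T := max_zero_sub_max_neg_zero_eq_self T
  have e : (m / 2) * (1 / Real.sqrt m * max T 0) + (m / 2) * (-(1 / Real.sqrt m) * max (-T) 0)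
      = m / (2 * Real.sqrt m) * (max T 0 - max (-T) 0) := by ring
  rw [e, h3]
  rw [show m / (2 * Real.sqrt m) = Real.sqrt m / 2 by
    rw [div_eq_div_iff (by positivity) two_ne_zero]; nlinarith]

/-- exact output of the idealized fine-tuned model (rank-one
attention `W = q·μμᵀ`, MLP rows `sign(aᵢ)·θ·μᵀ`, balanced `±1/√m` output
weights) on an input with `s₁` columns `μ`, `s₂` columns `−μ`, and the rest
task-irrelevant tokens. -/
theorem transformer_output_single_task {d P m M : ℕ}
    (hd : 1 ≤ d) (hP : 1 ≤ P) (hm : 2 ≤ m) (hme : Even m) (hM : 1 ≤ M)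
    (μ : Fin d → ℝ) (hμ : μ ⬝ᵥ μ = 1)
    (v : Fin M → Fin d → ℝ) (hv : ∀ k, v k ⬝ᵥ v k = 1) (hvμ : ∀ k, μ ⬝ᵥ v k = 0)
    (s₁ s₂ : ℕ) (S₁ S₂ : Finset (Fin P)) (hdisj : Disjoint S₁ S₂)
    (hS₁ : S₁.card = s₁) (hS₂ : S₂.card = s₂)
    (X : Matrix (Fin d) (Fin P) ℝ)
    (hX₁ : ∀ l ∈ S₁, colVec X l = μ)
    (hX₂ : ∀ l ∈ S₂, colVec X l = -μ)
    (hX₃ : ∀ l : Fin P, l ∉ S₁ → l ∉ S₂ → ∃ k : Fin M, colVec X l = v k)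
    (a : Fin m → ℝ) (A : Finset (Fin m)) (hA : A.card = m / 2)
    (haA : ∀ i ∈ A, a i = 1 / Real.sqrt m)
    (haA' : ∀ i ∉ A, a i = -(1 / Real.sqrt m))
    (θ : ℝ) (hθ : 0 < θ) (q : ℝ) (hq : 0 ≤ q)
    (V : Matrix (Fin m) (Fin d) ℝ)
    (hV : ∀ i k, V i k = Real.sign (a i) * θ * μ k)
    (W : Matrix (Fin d) (Fin d) ℝ) (hW : W = q • vecMulVec μ μ) :
    transformer a V W X =
      (θ * Real.sqrt m / (2 * (P : ℝ))) *
        ((s₁ : ℝ) *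
            (((s₁ : ℝ) * Real.exp q - (s₂ : ℝ) * Real.exp (-q)) /
              ((s₁ : ℝ) * Real.exp q + (s₂ : ℝ) * Real.exp (-q)
                + ((P : ℝ) - (s₁ : ℝ) - (s₂ : ℝ)))) +
         (s₂ : ℝ) *
            (((s₁ : ℝ) * Real.exp (-q) - (s₂ : ℝ) * Real.exp q) /
              ((s₁ : ℝ) * Real.exp (-q) + (s₂ : ℝ) * Real.exp q
                + ((P : ℝ) - (s₁ : ℝ) - (s₂ : ℝ)))) +
         ((P : ℝ) - (s₁ : ℝ) - (s₂ : ℝ)) * ((s₁ : ℝ) - (s₂ : ℝ)) / (P : ℝ)) := by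
  classical
  have hm0 : (0 : ℝ) < m := by exact_mod_cast lt_of_lt_of_le two_pos hm
  have hsqm : (0 : ℝ) < Real.sqrt m := Real.sqrt_pos.2 hm0
  set c : Fin P → ℝ := fun l => μ ⬝ᵥ colVec X l with hcdef
  have hc1 : ∀ l ∈ S₁, c l = 1 := fun l hl => by
    simp only [hcdef, hX₁ l hl, hμ]
  have hc2 : ∀ l ∈ S₂, c l = -1 := fun l hl => by
    simp only [hcdef, hX₂ l hl, dotProduct_neg, hμ]
  have hc0 : ∀ l : Fin P, l ∉ S₁ → l ∉ S₂ → c l = 0 := fun l h1 h2 => by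
    obtain ⟨k, hk⟩ := hX₃ l h1 h2
    simp only [hcdef, hk, hvμ k]
  have hU : (S₁ ∪ S₂).card = s₁ + s₂ := by
    rw [Finset.card_union_of_disjoint hdisj, hS₁, hS₂]
  have hle : s₁ + s₂ ≤ P := by
    calc s₁ + s₂ = (S₁ ∪ S₂).card := hU.symm
    _ ≤ Fintype.card (Fin P) := Finset.card_le_univ _
    _ = P := Fintype.card_fin P
  -- generic splitting of sums over tokens
  have hsplit : ∀ (g : Fin P → ℝ) (ga gb gc : ℝ),
      (∀ r ∈ S₁, g r = ga) → (∀ r ∈ S₂, g r = gb) →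
      (∀ r : Fin P, r ∉ S₁ → r ∉ S₂ → g r = gc) →
      ∑ r : Fin P, g r = (s₁ : ℝ) * ga + (s₂ : ℝ) * gb + ((P : ℝ) - s₁ - s₂) * gc := by
    intro g ga gb gc h1 h2 h3
    rw [← Finset.sum_add_sum_compl (S₁ ∪ S₂) g, Finset.sum_union hdisj]
    have e1 : ∑ r ∈ S₁, g r = (s₁ : ℝ) * ga := by
      rw [Finset.sum_congr rfl h1, Finset.sum_const, hS₁, nsmul_eq_mul]
    have e2 : ∑ r ∈ S₂, g r = (s₂ : ℝ) * gb := by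
      rw [Finset.sum_congr rfl h2, Finset.sum_const, hS₂, nsmul_eq_mul]
    have e3 : ∑ r ∈ (S₁ ∪ S₂)ᶜ, g r = ((P : ℝ) - s₁ - s₂) * gc := by
      have hgc : ∀ r ∈ (S₁ ∪ S₂)ᶜ, g r = gc := by
        intro r hr
        rw [Finset.mem_compl, Finset.mem_union] at hr
        push_neg at hr
        exact h3 r hr.1 hr.2
      rw [Finset.sum_congr rfl hgc, Finset.sum_const, Finset.card_compl, hU, nsmul_eq_mul]
      congr 1
      rw [Fintype.card_fin, Nat.cast_sub hle]
      push_cast; ring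
    rw [e1, e2, e3]
  -- attention scores
  have hscore : ∀ s l : Fin P,
      colVec X s ⬝ᵥ (W *ᵥ colVec X l) = q * (c s * c l) := by
    intro s l
    subst hW
    simp only [hcdef, Matrix.mulVec, Matrix.smul_apply, Matrix.vecMulVec_apply, dotProduct,
      smul_eq_mul, Finset.mul_sum, Finset.sum_mul]
    rw [Finset.sum_comm]
    refine Finset.sum_congr rfl fun i _ => Finset.sum_congr rfl fun j _ => by
      simp only [colVec]; ring
  set D : Fin P → ℝ := fun l => ∑ r : Fin P, Real.exp (q * (c r * c l)) with hDdef
  set N : Fin P → ℝ := fun l => ∑ s : Fin P, Real.exp (q * (c s * c l)) * c s with hNdef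
  have hDpos : ∀ l, 0 < D l := fun l =>
    Finset.sum_pos (fun r _ => Real.exp_pos _) ⟨⟨0, hP⟩, Finset.mem_univ _⟩
  have hattn : ∀ s l : Fin P,
      attnWeight X W s l = Real.exp (q * (c s * c l)) / D l := by
    intro s l
    unfold attnWeight
    rw [hscore]
    congr 1
    exact Finset.sum_congr rfl fun r _ => by rw [hscore]
  have hDval : ∀ l : Fin P, D l = (s₁ : ℝ) * Real.exp (q * c l)
      + (s₂ : ℝ) * Real.exp (-(q * c l)) + ((P : ℝ) - s₁ - s₂) := by
    intro l
    have key := hsplit (fun r => Real.exp (q * (c r * c l)))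
      (Real.exp (q * c l)) (Real.exp (-(q * c l))) 1
      (fun r hr => by
        show Real.exp (q * (c r * c l)) = _
        rw [hc1 r hr, one_mul])
      (fun r hr => by
        show Real.exp (q * (c r * c l)) = _
        rw [hc2 r hr]; congr 1; ring)
      (fun r h1 h2 => by
        show Real.exp (q * (c r * c l)) = _
        rw [hc0 r h1 h2]; simp)
    show (∑ r : Fin P, Real.exp (q * (c r * c l))) = _
    exact key.trans (by ring)
  have hNval : ∀ l : Fin P, N l = (s₁ : ℝ) * Real.exp (q * c l)
      - (s₂ : ℝ) * Real.exp (-(q * c l)) := by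
    intro l
    have key := hsplit (fun s => Real.exp (q * (c s * c l)) * c s)
      (Real.exp (q * c l)) (-Real.exp (-(q * c l))) 0
      (fun r hr => by
        show Real.exp (q * (c r * c l)) * c r = _
        rw [hc1 r hr, one_mul, mul_one])
      (fun r hr => by
        show Real.exp (q * (c r * c l)) * c r = _
        rw [hc2 r hr, mul_neg_one]
        rw [show q * (-1 * c l) = -(q * c l) by ring])
      (fun r h1 h2 => by
        show Real.exp (q * (c r * c l)) * c r = _
        rw [hc0 r h1 h2, mul_zero])
    show (∑ s : Fin P, Real.exp (q * (c s * c l)) * c s) = _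
    exact key.trans (by ring)
  -- dot product of μ with the attention head output
  have hmuh : ∀ l : Fin P,
      μ ⬝ᵥ (∑ s : Fin P, attnWeight X W s l • colVec X s) = N l / D l := by
    intro l
    have step : μ ⬝ᵥ (∑ s : Fin P, attnWeight X W s l • colVec X s)
        = ∑ s : Fin P, attnWeight X W s l * c s := by
      simp only [dotProduct, Finset.sum_apply, Pi.smul_apply, smul_eq_mul, Finset.mul_sum,
        hcdef]
      rw [Finset.sum_comm]
      refine Finset.sum_congr rfl fun s _ => Finset.sum_congr rfl fun i _ => by ring
    rw [step, hNdef, Finset.sum_div]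
    refine Finset.sum_congr rfl fun s _ => by
      rw [hattn s l, div_mul_eq_mul_div]
  -- MLP preactivation
  have hVh : ∀ (l : Fin P) (i : Fin m),
      (V *ᵥ ∑ s : Fin P, attnWeight X W s l • colVec X s) i
        = Real.sign (a i) * (θ * (N l / D l)) := by
    intro l i
    have h0 : (V *ᵥ ∑ s : Fin P, attnWeight X W s l • colVec X s) i
        = ∑ k : Fin d, V i k * (∑ s : Fin P, attnWeight X W s l • colVec X s) k := rfl
    rw [h0]
    have h1 : ∀ k : Fin d, V i k * (∑ s : Fin P, attnWeight X W s l • colVec X s) k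
        = Real.sign (a i) * θ * (μ k * (∑ s : Fin P, attnWeight X W s l • colVec X s) k) := by
      intro k; rw [hV i k]; ring
    rw [Finset.sum_congr rfl fun k _ => h1 k, ← Finset.mul_sum]
    have h2 : ∑ k : Fin d, μ k * (∑ s : Fin P, attnWeight X W s l • colVec X s) k
        = N l / D l := hmuh l
    rw [h2]; ring
  -- inner sum over neurons
  have hAc : Aᶜ.card = m / 2 := by
    rw [Finset.card_compl, hA, Fintype.card_fin]
    obtain ⟨r, hr⟩ := hme
    omega
  have hhalf : ((m / 2 : ℕ) : ℝ) = (m : ℝ) / 2 := by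
    obtain ⟨r, hr⟩ := hme
    subst hr
    rw [show r + r = 2 * r by ring, Nat.mul_div_cancel_left r two_pos]
    push_cast; ring
  have hinner : ∀ l : Fin P,
      ∑ i : Fin m, a i * max ((V *ᵥ ∑ s : Fin P, attnWeight X W s l • colVec X s) i) 0
        = Real.sqrt (m : ℝ) / 2 * (θ * (N l / D l)) := by
    intro l
    set T : ℝ := θ * (N l / D l) with hT
    rw [← Finset.sum_add_sum_compl A]
    have e1 : ∑ i ∈ A, a i * max ((V *ᵥ ∑ s : Fin P, attnWeight X W s l • colVec X s) i) 0
        = ((m : ℝ) / 2) * (1 / Real.sqrt m * max T 0) := by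
      have hptw : ∀ i ∈ A,
          a i * max ((V *ᵥ ∑ s : Fin P, attnWeight X W s l • colVec X s) i) 0
            = 1 / Real.sqrt m * max T 0 := by
        intro i hi
        rw [hVh l i, haA i hi,
          Real.sign_of_pos (show (0:ℝ) < 1 / Real.sqrt m by positivity), one_mul]
      rw [Finset.sum_congr rfl hptw, Finset.sum_const, hA, nsmul_eq_mul, hhalf]
    have e2 : ∑ i ∈ Aᶜ, a i * max ((V *ᵥ ∑ s : Fin P, attnWeight X W s l • colVec X s) i) 0
        = ((m : ℝ) / 2) * (-(1 / Real.sqrt m) * max (-T) 0) := by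
      have hptw : ∀ i ∈ Aᶜ,
          a i * max ((V *ᵥ ∑ s : Fin P, attnWeight X W s l • colVec X s) i) 0
            = -(1 / Real.sqrt m) * max (-T) 0 := by
        intro i hi
        rw [Finset.mem_compl] at hi
        rw [hVh l i, haA' i hi,
          Real.sign_of_neg (show -(1 / Real.sqrt m) < (0:ℝ) by
            rw [neg_lt_zero]; positivity)]
        rw [show (-1 : ℝ) * T = -T by ring]
      rw [Finset.sum_congr rfl hptw, Finset.sum_const, hAc, nsmul_eq_mul, hhalf]
    rw [e1, e2, half_relu_sum (m : ℝ) hm0 T]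
  -- assemble
  unfold transformer
  rw [Finset.sum_congr rfl fun l _ => hinner l]
  have hfac : ∑ l : Fin P, Real.sqrt (m : ℝ) / 2 * (θ * (N l / D l))
      = (Real.sqrt (m : ℝ) / 2 * θ) * ∑ l : Fin P, N l / D l := by
    rw [Finset.mul_sum]
    exact Finset.sum_congr rfl fun l _ => by ring
  rw [hfac]
  have ht := hsplit (fun l => N l / D l)
    (((s₁ : ℝ) * Real.exp q - (s₂ : ℝ) * Real.exp (-q)) /
      ((s₁ : ℝ) * Real.exp q + (s₂ : ℝ) * Real.exp (-q) + ((P : ℝ) - s₁ - s₂)))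
    (((s₁ : ℝ) * Real.exp (-q) - (s₂ : ℝ) * Real.exp q) /
      ((s₁ : ℝ) * Real.exp (-q) + (s₂ : ℝ) * Real.exp q + ((P : ℝ) - s₁ - s₂)))
    (((s₁ : ℝ) - s₂) / P)
    (fun l hl => by
      show N l / D l = _
      rw [hNval l, hDval l, hc1 l hl, mul_one])
    (fun l hl => by
      show N l / D l = _
      rw [hNval l, hDval l, hc2 l hl, mul_neg_one, neg_neg])
    (fun l h1 h2 => by
      show N l / D l = _
      rw [hNval l, hDval l, hc0 l h1 h2, mul_zero, neg_zero, Real.exp_zero, mul_one, mul_one,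
        show (s₁ : ℝ) + (s₂ : ℝ) + ((P : ℝ) - s₁ - s₂) = (P : ℝ) by ring])
  have ht' : (∑ l : Fin P, N l / D l) =
      (s₁ : ℝ) *
        (((s₁ : ℝ) * Real.exp q - (s₂ : ℝ) * Real.exp (-q)) /
          ((s₁ : ℝ) * Real.exp q + (s₂ : ℝ) * Real.exp (-q) + ((P : ℝ) - s₁ - s₂))) +
      (s₂ : ℝ) *
        (((s₁ : ℝ) * Real.exp (-q) - (s₂ : ℝ) * Real.exp q) /
          ((s₁ : ℝ) * Real.exp (-q) + (s₂ : ℝ) * Real.exp q + ((P : ℝ) - s₁ - s₂))) +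
      ((P : ℝ) - s₁ - s₂) * (((s₁ : ℝ) - s₂) / P) := ht
  rw [ht']
  ring
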